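/- Assume L = 1 and write f_λ = η_λ − θ. Then for every λ > 0 and every t ∈ (0,1], the differential inequality (d/dt)|f_λ(t)|² ≤ 2 |f_λ(t)| ( −λ |f_λ(t)| (1 − |f_λ(t)|) + sup_{s∈[0,1]}|θ′(s)| ) holds. -/

import Mathlib

open Real Set Filter

private lemma step1_aux (lam K c r J M T : ℝ) (hlam : 0 < lam)
    (hr2 : r ^ 2 = 2 - 2 * c) (hrle : r ≤ 2) (hrpos : 0 ≤ r)
    (hlamK : lam ≤ K) (hCS : -(r * T) ≤ J) (hT : T ≤ M) (hTnn : 0 ≤ T) :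
    2 * (K * (c ^ 2 - 1) - J) ≤ 2 * r * (-(lam * r * (1 - r)) + M) := by
  have hcle : c ≤ 1 := by nlinarith
  have hcge : -1 ≤ c := by nlinarith
  have h1 : c ^ 2 - 1 ≤ 0 := by nlinarith
  have hKb : K * (c ^ 2 - 1) ≤ lam * (c ^ 2 - 1) := by nlinarith
  have hceq : c = 1 - r ^ 2 / 2 := by linarith
  have hc2 : c ^ 2 - 1 = -(r ^ 2) + r ^ 4 / 4 := by rw [hceq]; ring
  have hmain : lam * (c ^ 2 - 1) ≤ -(lam * r ^ 2 * (1 - r)) := by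
    rw [hc2]
    nlinarith [mul_nonneg (mul_nonneg (mul_nonneg hlam.le (mul_nonneg hrpos hrpos)) hrpos)
      (by linarith : (0:ℝ) ≤ 4 - r)]
  have hMc : r * T ≤ r * M := mul_le_mul_of_nonneg_left hT hrpos
  have goal2 : 2 * r * (-(lam * r * (1 - r)) + M) = -(lam * r ^ 2 * (1 - r)) * 2 + 2 * (r * M) := by
    ring
  rw [goal2]
  linarith

/-- Setting as in the hyperbolic-development theorems, with `L = 1`:
`θ : [0,1] → S^{d-1}` is C¹ with derivative `θ'`, and for each `lam > 0` the pair
`(η lam, ρ lam)` solves the development ODE system.  Writing `f_lam = η lam − θ`: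
for every `lam > 0` and `t ∈ (0,1]` one has the differential inequality
`(d/dt)|f_lam(t)|² ≤ 2 |f_lam(t)| ( −lam |f_lam(t)| (1 − |f_lam(t)|) + sup_{[0,1]}|θ′| )`. -/
theorem step1_differential_inequality
    {d : ℕ} (hd : 0 < d)
    (θ θ' : ℝ → EuclideanSpace ℝ (Fin d))
    (hθ1 : ∀ t ∈ Icc (0 : ℝ) 1, ‖θ t‖ = 1)
    (hθd : ∀ t ∈ Icc (0 : ℝ) 1, HasDerivAt θ (θ' t) t)
    (hθ'c : ContinuousOn θ' (Icc 0 1))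
    (η : ℝ → ℝ → EuclideanSpace ℝ (Fin d)) (ρ : ℝ → ℝ → ℝ)
    (hηc : ∀ lam > (0 : ℝ), ContinuousOn (η lam) (Icc 0 1))
    (hρc : ∀ lam > (0 : ℝ), ContinuousOn (ρ lam) (Icc 0 1))
    (hη1 : ∀ lam > (0 : ℝ), ∀ t ∈ Icc (0 : ℝ) 1, ‖η lam t‖ = 1)
    (hη0 : ∀ lam > (0 : ℝ), η lam 0 = θ 0)
    (hρ0 : ∀ lam > (0 : ℝ), ρ lam 0 = 0)
    (hρpos : ∀ lam > (0 : ℝ), ∀ t ∈ Ioc (0 : ℝ) 1, 0 < ρ lam t)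
    (hODE : ∀ lam > (0 : ℝ), ∀ t ∈ Ioc (0 : ℝ) 1,
      HasDerivAt (η lam)
        ((lam * (Real.cosh (ρ lam t) / Real.sinh (ρ lam t))) •
          (θ t - (inner ℝ (θ t) (η lam t) : ℝ) • η lam t)) t ∧
      HasDerivAt (ρ lam) (lam * (inner ℝ (θ t) (η lam t) : ℝ)) t) :
    ∀ lam > (0 : ℝ), ∀ t ∈ Ioc (0 : ℝ) 1,
      deriv (fun s => ‖η lam s - θ s‖ ^ 2) t ≤
        2 * ‖η lam t - θ t‖ *
          (-(lam * ‖η lam t - θ t‖ * (1 - ‖η lam t - θ t‖)) +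
            ⨆ s ∈ Icc (0 : ℝ) 1, ‖θ' s‖) := by
  intro lam hlam t ht
  have htI : t ∈ Icc (0 : ℝ) 1 := ⟨ht.1.le, ht.2⟩
  obtain ⟨hηd, -⟩ := hODE lam hlam t ht
  have hθt := hθd t htI
  set K : ℝ := lam * (Real.cosh (ρ lam t) / Real.sinh (ρ lam t)) with hK
  set c : ℝ := (inner ℝ (θ t) (η lam t) : ℝ) with hc
  set v : EuclideanSpace ℝ (Fin d) := K • (θ t - c • η lam t) - θ' t with hv
  have hf : HasDerivAt (fun s => η lam s - θ s) v t := hηd.sub hθt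
  -- derivative of the squared norm
  have hsq : HasDerivAt (fun s => ‖η lam s - θ s‖ ^ 2)
      ((inner ℝ (η lam t - θ t) v : ℝ) + (inner ℝ v (η lam t - θ t) : ℝ)) t := by
    have := hf.inner ℝ hf
    have heq : (fun s => ‖η lam s - θ s‖ ^ 2)
        = fun s => (inner ℝ (η lam s - θ s) (η lam s - θ s) : ℝ) := by
      funext s; rw [real_inner_self_eq_norm_sq]
    rw [heq]; exact this
  have hderiv : deriv (fun s => ‖η lam s - θ s‖ ^ 2) t
      = 2 * (inner ℝ (η lam t - θ t) v : ℝ) := by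
    rw [hsq.deriv, real_inner_comm v]; ring
  rw [hderiv]
  set r : ℝ := ‖η lam t - θ t‖ with hr
  have hθn : ‖θ t‖ = 1 := hθ1 t htI
  have hηn : ‖η lam t‖ = 1 := hη1 lam hlam t htI
  have h1 : (inner ℝ (η lam t) (θ t) : ℝ) = c := by rw [hc]; exact real_inner_comm _ _
  have h2 : (inner ℝ (θ t) (η lam t) : ℝ) = c := hc.symm
  have h3 : (inner ℝ (η lam t) (η lam t) : ℝ) = 1 := by
    rw [real_inner_self_eq_norm_sq, hηn]; norm_num
  have h4 : (inner ℝ (θ t) (θ t) : ℝ) = 1 := by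
    rw [real_inner_self_eq_norm_sq, hθn]; norm_num
  have hr2 : r ^ 2 = 2 - 2 * c := by
    rw [hr, ← real_inner_self_eq_norm_sq, inner_sub_sub_self, h1, h2, h3, h4]
    ring
  have hrle : r ≤ 2 := by
    calc r ≤ ‖η lam t‖ + ‖θ t‖ := norm_sub_le _ _
    _ = 2 := by rw [hθn, hηn]; norm_num
  have hrpos : 0 ≤ r := norm_nonneg _
  -- the inner product with the ODE term
  have hinner : (inner ℝ (η lam t - θ t) (K • (θ t - c • η lam t)) : ℝ)
      = K * (c ^ 2 - 1) := by
    simp only [inner_smul_right, inner_sub_left, inner_sub_right, h1, h2, h3, h4]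
    ring
  -- coth ≥ 1
  have hρt := hρpos lam hlam t ht
  have hsinh : 0 < Real.sinh (ρ lam t) := Real.sinh_pos_iff.mpr hρt
  have hcoth : 1 ≤ Real.cosh (ρ lam t) / Real.sinh (ρ lam t) :=
    (one_le_div hsinh).mpr (Real.sinh_lt_cosh _).le
  -- bound on sup of ‖θ'‖
  obtain ⟨C, hC⟩ := isCompact_Icc.exists_bound_of_continuousOn hθ'c
  have hMbdd : BddAbove (range fun s => ⨆ _ : s ∈ Icc (0:ℝ) 1, ‖θ' s‖) := by
    refine ⟨max C 0, ?_⟩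
    rintro x ⟨s, rfl⟩
    by_cases hs : s ∈ Icc (0:ℝ) 1
    · show (⨆ _ : s ∈ Icc (0:ℝ) 1, ‖θ' s‖) ≤ max C 0
      rw [ciSup_pos hs]; exact le_max_of_le_left (hC s hs)
    · show (⨆ _ : s ∈ Icc (0:ℝ) 1, ‖θ' s‖) ≤ max C 0
      simp only [hs, iSup_false]
      rw [Real.iSup_of_isEmpty]
      · exact le_max_right C 0
  have hM : ‖θ' t‖ ≤ ⨆ s ∈ Icc (0:ℝ) 1, ‖θ' s‖ := by
    have := le_ciSup hMbdd t
    rwa [ciSup_pos htI] at this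
  have hCS : -(r * ‖θ' t‖) ≤ (inner ℝ (η lam t - θ t) (θ' t) : ℝ) := by
    have := abs_real_inner_le_norm (η lam t - θ t) (θ' t)
    rw [abs_le] at this
    linarith [this.1]
  have hθ'nn : (0:ℝ) ≤ ‖θ' t‖ := norm_nonneg _
  -- expand inner with v
  set J : ℝ := (inner ℝ (η lam t - θ t) (θ' t) : ℝ) with hJ
  have hexp : (inner ℝ (η lam t - θ t) v : ℝ) = K * (c ^ 2 - 1) - J := by
    rw [hv, inner_sub_right, hinner]
  set M : ℝ := ⨆ s ∈ Icc (0:ℝ) 1, ‖θ' s‖ with hMdef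
  have hlamK : lam ≤ K := by
    rw [hK]; nlinarith [hcoth, hlam]
  rw [hexp]
  clear_value c r J M K
  exact step1_aux lam K c r J M (‖θ' t‖) hlam hr2 hrle hrpos hlamK hCS hM hθ'nn
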